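/- Let G be a finite simple graph in which every vertex has positive degree, and let i and j be adjacent marked vertices with equal degree d = deg(i) = deg(j), with marked set M = {i,j}. Let e_{ij} be the dart from i to j and e_{ji} the dart from j to i. Then the state φ defined by φ(e) = a for every dart e ∉ {e_{ij}, e_{ji}} and φ(e_{ij}) = φ(e_{ji}) = −(d−1)a is fixed by one step of the search algorithm: (S∘C∘Q)φ = φ. -/
import Mathlib


namespace GraphWalk

variable {V : Type*}

/-- The flip-flop shift operator `S` on the darts of a simple graph:
`(Sψ)(e) = ψ(e.symm)`. -/
noncomputable def shift (G : SimpleGraph V) (ψ : G.Dart → ℂ) : G.Dart → ℂ :=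
  fun e => ψ e.symm

/-- The Grover coin `C`:
`(Cψ)(e) = (2/deg(e.fst)) Σ_{e' : e'.fst = e.fst} ψ(e') − ψ(e)`. -/
noncomputable def coin [Fintype V] [DecidableEq V] (G : SimpleGraph V)
    [DecidableRel G.Adj] (ψ : G.Dart → ℂ) : G.Dart → ℂ :=
  fun e => (2 / (G.degree e.fst : ℂ)) *
      (∑ e' ∈ Finset.univ.filter (fun e' : G.Dart => e'.fst = e.fst), ψ e') - ψ e

/-- The query `Q`, flipping the sign of all amplitudes at marked vertices. -/
noncomputable def query [DecidableEq V] (G : SimpleGraph V) (M : Finset V)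
    (ψ : G.Dart → ℂ) : G.Dart → ℂ :=
  fun e => if e.fst ∈ M then -ψ e else ψ e

/-- One step of the search algorithm, `U' = S ∘ C ∘ Q`. -/
noncomputable def step [Fintype V] [DecidableEq V] (G : SimpleGraph V)
    [DecidableRel G.Adj] (M : Finset V) (ψ : G.Dart → ℂ) : G.Dart → ℂ :=
  shift G (coin G (query G M ψ))

/-- One step of the quantum walk without query, `U = S ∘ C`. -/
noncomputable def walk [Fintype V] [DecidableEq V] (G : SimpleGraph V)
    [DecidableRel G.Adj] (ψ : G.Dart → ℂ) : G.Dart → ℂ :=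
  shift G (coin G ψ)

end GraphWalk

/-- Let `i` and `j` be adjacent marked vertices of equal degree `d` in a finite simple
graph in which every vertex has positive degree. The state equal to `a` on every dart
except the two darts between `i` and `j`, where it equals `-(d-1)a`, is fixed by one
step of the search algorithm `S ∘ C ∘ Q` with marked set `{i, j}`. -/
theorem two_adjacent_marked_stationary {V : Type*} [Fintype V] [DecidableEq V]
    (G : SimpleGraph V) [DecidableRel G.Adj] (hdeg : ∀ v : V, 0 < G.degree v)
    (i j : V) (hadj : G.Adj i j) (hd : G.degree i = G.degree j) (a : ℂ) :
    GraphWalk.step G {i, j}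
      (fun e => if e.toProd = (i, j) ∨ e.toProd = (j, i)
        then -((G.degree i : ℂ) - 1) * a else a)
    = fun e => if e.toProd = (i, j) ∨ e.toProd = (j, i)
        then -((G.degree i : ℂ) - 1) * a else a := by
  classical
  have hne : i ≠ j := hadj.ne
  set c : ℂ := -((G.degree i : ℂ) - 1) * a with hc
  set φ : G.Dart → ℂ := (fun e => if e.toProd = (i, j) ∨ e.toProd = (j, i)
        then c else a) with hφ
  -- sum of φ over the darts based at i (resp. j) is zero
  have hsum : ∀ (u w : V) (huw : G.Adj u w), ((u, w) = (i, j) ∨ (u, w) = (j, i)) →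
      ∑ e' ∈ Finset.univ.filter (fun e' : G.Dart => e'.fst = u), φ e' = 0 := by
    intro u w huw hw
    set D : G.Dart := ⟨(u, w), huw⟩ with hD
    have hDmem : D ∈ Finset.univ.filter (fun e' : G.Dart => e'.fst = u) := by
      simp [hD]
    have key : ∀ e' ∈ Finset.univ.filter (fun e' : G.Dart => e'.fst = u),
        φ e' = a + (if e' = D then c - a else 0) := by
      intro e' he'
      simp only [Finset.mem_filter, Finset.mem_univ, true_and] at he'
      have hcond : (e'.toProd = (i, j) ∨ e'.toProd = (j, i)) ↔ e' = D := by
        constructor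
        · rintro (h | h)
          · rcases hw with hw | hw
            · exact SimpleGraph.Dart.ext _ _ (by rw [h, hD, ← hw])
            · exfalso
              have hfi : e'.fst = i := congrArg Prod.fst h
              have hui : u = i := by rw [← he', hfi]
              have huj : u = j := (Prod.mk.inj hw).1
              exact hne (hui ▸ huj ▸ rfl)
          · rcases hw with hw | hw
            · exfalso
              have hfj : e'.fst = j := congrArg Prod.fst h
              have huj : u = j := by rw [← he', hfj]
              have hui : u = i := (Prod.mk.inj hw).1
              exact hne (hui ▸ huj ▸ rfl)
            · exact SimpleGraph.Dart.ext _ _ (by rw [h, hD, ← hw])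
        · rintro rfl
          rcases hw with hw | hw
          · exact Or.inl hw
          · exact Or.inr hw
      rw [hφ]
      simp only
      rw [if_congr hcond rfl rfl]
      by_cases h : e' = D
      · rw [if_pos h, if_pos h]; ring
      · rw [if_neg h, if_neg h, add_zero]
    rw [Finset.sum_congr rfl key, Finset.sum_add_distrib, Finset.sum_const,
      SimpleGraph.dart_fst_fiber_card_eq_degree, Finset.sum_ite_eq' _ D, if_pos hDmem]
    have hdu : G.degree u = G.degree i := by
      rcases hw with hw | hw
      · rw [(Prod.mk.inj hw).1]
      · rw [(Prod.mk.inj hw).1, ← hd]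
    rw [hdu, nsmul_eq_mul, hc]
    ring
  -- the query applied to φ
  set ψ : G.Dart → ℂ := GraphWalk.query G {i, j} φ with hψ
  -- sum of ψ over the darts based at any vertex
  have hsumψ : ∀ v : V, ∑ e' ∈ Finset.univ.filter (fun e' : G.Dart => e'.fst = v), ψ e'
      = if v = i ∨ v = j then 0 else (G.degree v : ℂ) * a := by
    intro v
    by_cases hv : v = i ∨ v = j
    · rw [if_pos hv]
      have hmark : ∀ e' ∈ Finset.univ.filter (fun e' : G.Dart => e'.fst = v),
          ψ e' = -φ e' := by
        intro e' he'
        simp only [Finset.mem_filter, Finset.mem_univ, true_and] at he'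
        rw [hψ]
        simp only [GraphWalk.query]
        rw [if_pos]
        rw [he']
        rcases hv with hv | hv <;> simp [hv]
      rw [Finset.sum_congr rfl hmark, Finset.sum_neg_distrib]
      rcases hv with hv | hv
      · subst hv; rw [hsum v j hadj (Or.inl rfl)]; ring
      · subst hv; rw [hsum v i hadj.symm (Or.inr rfl)]; ring
    · rw [if_neg hv]
      push_neg at hv
      have hval : ∀ e' ∈ Finset.univ.filter (fun e' : G.Dart => e'.fst = v),
          ψ e' = a := by
        intro e' he'
        simp only [Finset.mem_filter, Finset.mem_univ, true_and] at he'
        rw [hψ]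
        simp only [GraphWalk.query]
        rw [if_neg, hφ]
        · simp only
          rw [if_neg]
          push_neg
          constructor
          · intro hcon; exact hv.1 (by rw [← he', congrArg Prod.fst hcon])
          · intro hcon; exact hv.2 (by rw [← he', congrArg Prod.fst hcon])
        · rw [he']
          simp [hv.1, hv.2]
      rw [Finset.sum_congr rfl hval, Finset.sum_const,
        SimpleGraph.dart_fst_fiber_card_eq_degree, nsmul_eq_mul]
  -- the coin applied to ψ gives back φ
  have hcoin : GraphWalk.coin G ψ = φ := by
    funext e
    simp only [GraphWalk.coin]
    rw [hsumψ e.fst]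
    by_cases hv : e.fst = i ∨ e.fst = j
    · rw [if_pos hv, mul_zero, zero_sub, hψ]
      simp only [GraphWalk.query]
      rw [if_pos]
      · ring
      · rcases hv with hv | hv <;> simp [hv]
    · rw [if_neg hv]
      push_neg at hv
      have hdv : (G.degree e.fst : ℂ) ≠ 0 := by
        exact_mod_cast (hdeg e.fst).ne'
      have hφe : φ e = a := by
        rw [hφ]
        simp only
        rw [if_neg]
        push_neg
        constructor
        · intro hcon; exact hv.1 (congrArg Prod.fst hcon)
        · intro hcon; exact hv.2 (congrArg Prod.fst hcon)
      have hψe : ψ e = a := by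
        rw [hψ]
        simp only [GraphWalk.query]
        rw [if_neg, hφe]
        simp [hv.1, hv.2]
      rw [hψe, hφe]
      field_simp
      ring
  -- conclude: the shift fixes φ
  show GraphWalk.shift G (GraphWalk.coin G ψ) = φ
  rw [hcoin]
  funext e
  simp only [GraphWalk.shift, hφ]
  have hsymm : e.symm.toProd = e.toProd.swap := rfl
  have hswap : ∀ (p : V × V) (x y : V), p.swap = (x, y) ↔ p = (y, x) := by
    intro p x y
    constructor
    · intro h; rw [← Prod.swap_swap p, h]; rfl
    · rintro rfl; rfl
  have hcond : (e.symm.toProd = (i, j) ∨ e.symm.toProd = (j, i)) ↔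
      (e.toProd = (i, j) ∨ e.toProd = (j, i)) := by
    rw [hsymm, hswap e.toProd i j, hswap e.toProd j i, or_comm]
  rw [if_congr hcond rfl rfl]
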